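/- Let x1,...,xn be nonzero complex numbers, viewed as vectors in ℝ², and suppose there is an angle 0 ≤ θ < 2π/3 such that for all i,j the angle between xi and xj is at most θ. Then |∑ xi| ≥ cos(θ/2) · ∑ |xi|. -/

import Mathlib

open Complex Finset in
private lemma angle_key (n : ℕ) (x : Fin n → ℂ) (hx : ∀ i, x i ≠ 0)
    (θ : ℝ) (hθ0 : 0 ≤ θ) (hθ : θ < 2 * Real.pi / 3)
    (hang : ∀ i j, |Complex.arg (x i / x j)| ≤ θ) (i0 : Fin n) :
    Real.cos (θ / 2) * ∑ i, ‖x i‖ ≤ ‖∑ i, x i‖ := by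
  have hpi : 0 < Real.pi := Real.pi_pos
  set a : Fin n → ℝ := fun i => Complex.arg (x i / x i0) with ha
  have hdiff : ∀ i j, |a i - a j| ≤ θ := by
    intro i j
    have h1 : ((Complex.arg (x i / x j) : ℝ) : Real.Angle) = ((a i - a j : ℝ) : Real.Angle) := by
      rw [ha]
      simp only [Real.Angle.coe_sub]
      rw [Complex.arg_div_coe_angle (hx i) (hx j), Complex.arg_div_coe_angle (hx i) (hx i0),
        Complex.arg_div_coe_angle (hx j) (hx i0)]
      abel
    obtain ⟨k, hk⟩ := Real.Angle.angle_eq_iff_two_pi_dvd_sub.mp h1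
    -- arg(xi/xj) - (a i - a j) = 2π k
    have habs1 : |Complex.arg (x i / x j)| ≤ θ := hang i j
    have habs2 : |a i| ≤ θ := by simpa using hang i i0
    have habs3 : |a j| ≤ θ := by simpa using hang j i0
    have hk0 : k = 0 := by
      by_contra hk0
      have h1k : (1 : ℝ) ≤ |(k : ℝ)| := by
        exact_mod_cast Int.one_le_abs (by exact_mod_cast hk0)
      have : 2 * Real.pi ≤ |2 * Real.pi * k| := by
        rw [abs_mul, abs_of_pos (by linarith)]
        nlinarith
      rw [← hk] at this
      have := abs_sub_abs_le_abs_sub (Complex.arg (x i / x j)) (a i - a j)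
      have h4 : |a i - a j| ≤ 2 * θ := by
        calc |a i - a j| ≤ |a i| + |a j| := abs_sub _ _
          _ ≤ 2 * θ := by linarith
      have := abs_sub (Complex.arg (x i / x j)) (a i - a j)
      nlinarith [abs_abs_sub_abs_le_abs_sub (Complex.arg (x i / x j)) (a i - a j)]
    rw [hk0] at hk
    simp at hk
    calc |a i - a j| = |Complex.arg (x i / x j)| := by rw [← sub_eq_zero.mp hk]
      _ ≤ θ := hang i j
  have hne : (Finset.univ : Finset (Fin n)).Nonempty := ⟨i0, Finset.mem_univ i0⟩
  set S := Finset.univ.sup' hne a with hS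
  set I' := Finset.univ.inf' hne a with hI'
  have hSI : S - I' ≤ θ := by
    obtain ⟨i, -, hi⟩ := Finset.exists_mem_eq_sup' hne a
    obtain ⟨j, -, hj⟩ := Finset.exists_mem_eq_inf' hne a
    have h := hdiff i j
    have h1 : S = a i := hi
    have h2 : I' = a j := hj
    rw [h1, h2]
    linarith [le_abs_self (a i - a j)]
  set m := (S + I') / 2 with hm
  have hbi : ∀ i, |a i - m| ≤ θ / 2 := by
    intro i
    have h1 : a i ≤ S := Finset.le_sup' a (Finset.mem_univ i)
    have h2 : I' ≤ a i := Finset.inf'_le a (Finset.mem_univ i)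
    rw [abs_le]
    constructor <;> [skip; skip] <;> simp only [hm] <;> linarith
  -- pointwise lower bound on real part
  set c : ℝ := Complex.arg (x i0) + m with hc
  have hpoint : ∀ i, Real.cos (θ / 2) * ‖x i‖ ≤
      (x i * Complex.exp (-(c : ℂ) * Complex.I)).re := by
    intro i
    have hxi : (‖x i‖ : ℂ) * Complex.exp (Complex.arg (x i) * Complex.I) = x i :=
      Complex.norm_mul_exp_arg_mul_I (x i)
    have : x i * Complex.exp (-(c : ℂ) * Complex.I)
        = (‖x i‖ : ℂ) * Complex.exp (((Complex.arg (x i) - c : ℝ) : ℂ) * Complex.I) := by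
      conv_lhs => rw [← hxi]
      rw [mul_assoc, ← Complex.exp_add]
      push_cast
      ring_nf
    rw [this]
    have hre : ((‖x i‖ : ℂ) * Complex.exp (((Complex.arg (x i) - c : ℝ) : ℂ) * Complex.I)).re
        = ‖x i‖ * Real.cos (Complex.arg (x i) - c) := by
      rw [Complex.re_ofReal_mul, Complex.exp_ofReal_mul_I_re]
    rw [hre]
    -- cos(arg xi - c) = cos(a i - m)
    have hangle : ((Complex.arg (x i) - Complex.arg (x i0) : ℝ) : Real.Angle) = ((a i : ℝ) : Real.Angle) := by
      rw [ha]
      rw [Complex.arg_div_coe_angle (hx i) (hx i0)]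
      push_cast
      rfl
    obtain ⟨k, hk⟩ := Real.Angle.angle_eq_iff_two_pi_dvd_sub.mp hangle
    have hcos : Real.cos (Complex.arg (x i) - c) = Real.cos (a i - m) := by
      have : Complex.arg (x i) - c = (a i - m) + k * (2 * Real.pi) := by
        rw [hc]; linarith [hk]
      rw [this, Real.cos_add_int_mul_two_pi]
    rw [hcos]
    have hcosge : Real.cos (θ / 2) ≤ Real.cos (a i - m) := by
      rw [← Real.cos_abs (a i - m)]
      apply Real.cos_le_cos_of_nonneg_of_le_pi (abs_nonneg _) (by linarith) (hbi i)
    have habs : (0 : ℝ) ≤ ‖x i‖ := norm_nonneg _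
    nlinarith
  calc Real.cos (θ / 2) * ∑ i, ‖x i‖
      = ∑ i, Real.cos (θ / 2) * ‖x i‖ := by rw [Finset.mul_sum]
    _ ≤ ∑ i, (x i * Complex.exp (-(c : ℂ) * Complex.I)).re :=
        Finset.sum_le_sum fun i _ => hpoint i
    _ = ((∑ i, x i) * Complex.exp (-(c : ℂ) * Complex.I)).re := by
        rw [Finset.sum_mul, Complex.re_sum]
    _ ≤ ‖(∑ i, x i) * Complex.exp (-(c : ℂ) * Complex.I)‖ := Complex.re_le_norm _
    _ = ‖∑ i, x i‖ := by
        rw [norm_mul]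
        have : ‖Complex.exp (-(c : ℂ) * Complex.I)‖ = 1 := by
          rw [show (-(c:ℂ)) = ((-c : ℝ) : ℂ) by push_cast; ring]
          exact Complex.norm_exp_ofReal_mul_I (-c)
        rw [this, mul_one]

/-- The angle lemma: if nonzero complex numbers pairwise make an angle at most
θ < 2π/3, then the modulus of their sum is at least cos(θ/2) times the sum of
their moduli. -/
theorem stmt4 (n : ℕ) (x : Fin n → ℂ) (hx : ∀ i, x i ≠ 0)
    (θ : ℝ) (hθ0 : 0 ≤ θ) (hθ : θ < 2 * Real.pi / 3)
    (hang : ∀ i j, |Complex.arg (x i / x j)| ≤ θ) :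
    Real.cos (θ / 2) * ∑ i, ‖x i‖ ≤ ‖∑ i, x i‖ := by
  rcases Nat.eq_zero_or_pos n with hn | hn
  · subst hn; simp
  · exact angle_key n x hx θ hθ0 hθ hang ⟨0, hn⟩
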